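/- Let ‖·‖ be a submultiplicative norm on ℝ^{w×w}, n a positive integer, and ε ∈ (0,1). Let A₁,…,Aₙ ∈ ℝ^{w×w} satisfy ‖A_i‖ ≤ 1 for all i, and let matrices B_{i,j} ∈ ℝ^{w×w} for 0 ≤ i ≤ j ≤ n satisfy B_{i,i} = I for all i, B_{i−1,i} = A_i for all i ∈ [n], and ‖B_{i,j} − A_{i+1}A_{i+2}⋯A_j‖ ≤ ε/(2(n+1)) whenever i+1 < j. Then for every positive odd integer k, setting K = (8n)^{k+1}, there exist indices 0 ≤ n_{i,1} ≤ n_{i,2} ≤ … ≤ n_{i,k} = n and signs σ_i ∈ {−1,0,1} for each i ∈ [K] such that ‖A₁A₂⋯Aₙ − Σ_{i=1}^{K} σ_i · B_{0,n_{i,1}} B_{n_{i,1},n_{i,2}} ⋯ B_{n_{i,k−1},n_{i,k}}‖ ≤ ε^{(k+1)/2}·(n+1). -/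

import Mathlib

open Real Finset
open scoped Classical

noncomputable section

/-- Expectation of a real-valued function under the uniform distribution on a finite type. -/
def uniformExp {α : Type*} [Fintype α] (f : α → ℝ) : ℝ :=
  (∑ x, f x) / (Fintype.card α)

/-- A read-once branching program of length `n`, alphabet `{0,1}^s`, width `w`. -/
structure ROBP (n s w : ℕ) where
  δ : Fin n → Fin w → (Fin s → Bool) → Fin w
  start : Fin w
  accept : Finset (Fin w)

def ROBP.run {n s w : ℕ} (P : ROBP n s w) (x : Fin n → Fin s → Bool) : Fin w :=
  Fin.foldl n (fun v i => P.δ i v (x i)) P.start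

def ROBP.fn {n s w : ℕ} (P : ROBP n s w) (x : Fin n → Fin s → Bool) : ℝ :=
  if P.run x ∈ P.accept then 1 else 0

/-- The class of functions computed by ROBPs of length `n`, alphabet `{0,1}^s`, width `w`. -/
def Bclass (n s w : ℕ) : Set ((Fin n → Fin s → Bool) → ℝ) :=
  {f | ∃ P : ROBP n s w, f = P.fn}

/-- `(G, σ)` is a `W`-bounded `ε`-WPRG for the class `F`. -/
def IsWPRG {n s : ℕ} {ι : Type} [Fintype ι]
    (F : Set ((Fin n → Fin s → Bool) → ℝ))
    (G : ι → Fin n → Fin s → Bool) (σ : ι → ℝ) (W ε : ℝ) : Prop :=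
  (∀ r, |σ r| ≤ W) ∧
  ∀ f ∈ F, |uniformExp f - uniformExp (fun r => σ r * f (G r))| ≤ ε

/-- `G` is an `ε`-PRG for the class `F`. -/
def IsPRG {n s : ℕ} {ι : Type} [Fintype ι]
    (F : Set ((Fin n → Fin s → Bool) → ℝ))
    (G : ι → Fin n → Fin s → Bool) (ε : ℝ) : Prop :=
  ∀ f ∈ F, |uniformExp f - uniformExp (fun r => f (G r))| ≤ ε

/-- `(R, σ)` is a `(log₂ card ι, K, ε)`-weighted pseudorandom reduction from `F₀` to `F₁`. -/
def IsWPR {n₀ s₀ n₁ s₁ : ℕ} {ι : Type} [Fintype ι]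
    (F₀ : Set ((Fin n₀ → Fin s₀ → Bool) → ℝ))
    (F₁ : Set ((Fin n₁ → Fin s₁ → Bool) → ℝ))
    (R : (Fin n₁ → Fin s₁ → Bool) → ι → Fin n₀ → Fin s₀ → Bool)
    (σ : ι → ℝ) (K ε : ℝ) : Prop :=
  (∀ f ∈ F₀,
      |uniformExp f - uniformExp (fun i => σ i * uniformExp (fun x => f (R x i)))| ≤ ε) ∧
  (∀ i, |σ i| ≤ K) ∧
  (∀ f ∈ F₀, ∀ i, (fun x => f (R x i)) ∈ F₁)

def ROBP.Regular {n s w : ℕ} (P : ROBP n s w) : Prop :=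
  ∀ (i : Fin n) (v : Fin w),
    (Finset.univ.filter (fun ux : Fin w × (Fin s → Bool) => P.δ i ux.1 ux.2 = v)).card = 2 ^ s

def ROBP.Permutation {n s w : ℕ} (P : ROBP n s w) : Prop :=
  ∀ (i : Fin n) (x : Fin s → Bool), Function.Bijective (fun u => P.δ i u x)

/-- Regular ROBPs of length `n`, alphabet `{0,1}^s`, width `w`. -/
def Rclass (n s w : ℕ) : Set ((Fin n → Fin s → Bool) → ℝ) :=
  {f | ∃ P : ROBP n s w, P.Regular ∧ f = P.fn}

/-- Permutation ROBPs of length `n` over `{0,1}^s`, unbounded width, a single accept node. -/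
def Pclass (n s : ℕ) : Set ((Fin n → Fin s → Bool) → ℝ) :=
  {f | ∃ (w : ℕ) (P : ROBP n s w), P.Permutation ∧ P.accept.card = 1 ∧ f = P.fn}

/-- Permutation ROBPs of length `n`, alphabet `{0,1}^s`, width `w`, arbitrary accept set. -/
def PermClass (n s w : ℕ) : Set ((Fin n → Fin s → Bool) → ℝ) :=
  {f | ∃ P : ROBP n s w, P.Permutation ∧ f = P.fn}

/-- Run `P` starting from node `v` in layer `i` (only the transitions from layer `i` on are applied). -/
def ROBP.runFrom {n s w : ℕ} (P : ROBP n s w) (i : ℕ) (v : Fin w)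
    (x : Fin n → Fin s → Bool) : Fin w :=
  Fin.foldl n (fun u j => if i ≤ (j : ℕ) then P.δ j u (x j) else u) v

/-- Acceptance probability of the subprogram of `P` started at node `v` of layer `i`. -/
def ROBP.valueAt {n s w : ℕ} (P : ROBP n s w) (i : ℕ) (v : Fin w) : ℝ :=
  uniformExp (fun x : Fin n → Fin s → Bool => if P.runFrom i v x ∈ P.accept then (1 : ℝ) else 0)

/-- The weight `W(f)` of an ROBP: the sum over all edges of the differences of acceptance values. -/
def ROBP.weight {n s w : ℕ} (P : ROBP n s w) : ℝ :=
  ∑ i : Fin n, ∑ u : Fin w, ∑ x : Fin s → Bool,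
    |P.valueAt ((i : ℕ) + 1) (P.δ i u x) - P.valueAt (i : ℕ) u|

/-- `(k,ε)`-extractor. -/
def IsExtractor (N d m : ℕ)
    (Ext : (Fin N → Bool) → (Fin d → Bool) → (Fin m → Bool)) (k ε : ℝ) : Prop :=
  ∀ p : (Fin N → Bool) → ℝ,
    (∀ x, 0 ≤ p x) → (∑ x, p x) = 1 → (∀ x, p x ≤ (2 : ℝ) ^ (-k)) →
    (1 / 2) * ∑ z : Fin m → Bool,
      |(∑ x, ∑ y : Fin d → Bool, p x * (if Ext x y = z then (1 : ℝ) else 0)) / 2 ^ d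
        - 1 / 2 ^ m| ≤ ε

/-- `(α,γ)`-averaging sampler. -/
def IsAvgSampler (r p q : ℕ)
    (Samp : (Fin r → Bool) → (Fin p → Bool) → (Fin q → Bool)) (α γ : ℝ) : Prop :=
  ∀ f : (Fin q → Bool) → ℝ, (∀ z, -1 ≤ f z ∧ f z ≤ 1) →
    (∑ x : Fin r → Bool,
        if α ≤ |(∑ y : Fin p → Bool, f (Samp x y)) / 2 ^ p - uniformExp f| then (1 : ℝ) else 0)
      / 2 ^ r ≤ γ

/-- The matrix norm `‖M‖₁ = max_i Σ_j |M i j|`. -/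
def matOneNorm {w : ℕ} (M : Matrix (Fin w) (Fin w) ℝ) : ℝ :=
  ⨆ i, ∑ j, |M i j|

end
noncomputable section StmtSix

open List in
/-- product of B along a path of nodes -/
def prodB {w : ℕ} (B : ℕ → ℕ → Matrix (Fin w) (Fin w) ℝ) : List ℕ → Matrix (Fin w) (Fin w) ℝ
  | [] => 1
  | [_] => 1
  | a :: b :: rest => B a b * prodB B (b :: rest)

/-- Richardson iterates -/
def yy {w : ℕ} (n : ℕ) (B : ℕ → ℕ → Matrix (Fin w) (Fin w) ℝ) :
    ℕ → ℕ → Matrix (Fin w) (Fin w) ℝ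
  | 0, j => B j n
  | (m+1), j => B j n -
      ((List.range' j (n-j)).map
        (fun l => (B j (l+1) - B j l * B l (l+1)) * yy n B m (l+1))).sum

/-- expansion terms: (sign, path) -/
def tms (n : ℕ) : ℕ → ℕ → List (ℝ × List ℕ)
  | 0, j => [((1:ℝ), [j, n])]
  | (m+1), j => ((1:ℝ), [j, n]) :: ((List.range' j (n-j)).flatMap (fun l =>
      ((tms n m (l+1)).map (fun p => (-p.1, j :: p.2))) ++
      ((tms n m (l+1)).map (fun p => (p.1, j :: l :: p.2)))))

section aux
variable {w : ℕ} {α : Type*}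

lemma listsum_neg (l : List α) (h : α → Matrix (Fin w) (Fin w) ℝ) :
    (l.map (fun x => -h x)).sum = -(l.map h).sum := by
  induction l with
  | nil => simp
  | cons a t ih => simp [ih]; abel

lemma listsum_mul_left (l : List α) (C : Matrix (Fin w) (Fin w) ℝ)
    (h : α → Matrix (Fin w) (Fin w) ℝ) :
    (l.map (fun x => C * h x)).sum = C * (l.map h).sum := by
  induction l with
  | nil => simp
  | cons a t ih => simp [ih, mul_add]

lemma listsum_sub (l : List α) (f g : α → Matrix (Fin w) (Fin w) ℝ) :
    (l.map f).sum - (l.map g).sum = (l.map (fun x => f x - g x)).sum := by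
  induction l with
  | nil => simp
  | cons a t ih => simp [← ih]; abel

lemma listsum_flatMap {β : Type*} [AddCommMonoid β] (l : List α) (g : α → List β) :
    (l.flatMap g).sum = (l.map (fun a => (g a).sum)).sum := by
  induction l with
  | nil => simp
  | cons a t ih => simp [List.flatMap_cons, ih]

lemma listsum_dite {β : Type*} [AddCommMonoid β] (L : List α) (g : α → β) :
    ∑ x ∈ Finset.range L.length, (if h : x < L.length then g (L.get ⟨x,h⟩) else 0)
      = (L.map g).sum := by
  induction L with
  | nil => simp
  | cons a t ih =>
      show (∑ x ∈ Finset.range (t.length+1),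
          if h : x < t.length+1 then g ((a::t).get ⟨x,h⟩) else 0) = _
      rw [Finset.sum_range_succ']
      simp only [List.map_cons, List.sum_cons]
      have h0 : (if h : 0 < t.length + 1
          then g ((a :: t).get ⟨0, h⟩) else 0) = g a := by
        rw [dif_pos (by omega)]
        rfl
      have h1 : ∀ x ∈ Finset.range t.length, (if h : x + 1 < t.length + 1
          then g ((a :: t).get ⟨x+1, h⟩) else 0)
          = (if h : x < t.length then g (t.get ⟨x,h⟩) else 0) := by
        intro x hx
        rw [Finset.mem_range] at hx
        rw [dif_pos (by omega : x + 1 < t.length + 1), dif_pos hx]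
        rfl
      rw [Finset.sum_congr rfl h1, h0, ih, add_comm]

lemma teleaux (f : ℕ → Matrix (Fin w) (Fin w) ℝ) (a r : ℕ) :
    ((List.range' a r).map (fun l => f (l+1) - f l)).sum = f (a+r) - f a := by
  induction r generalizing a with
  | zero => simp
  | succ r ih =>
      rw [List.range'_succ]
      simp only [List.map_cons, List.sum_cons, ih (a+1)]
      have : a + 1 + r = a + (r+1) := by omega
      rw [this]; abel
end aux

section core
variable {w n : ℕ} {ε : ℝ}
variable {nrm : Matrix (Fin w) (Fin w) ℝ → ℝ}
variable {A : ℕ → Matrix (Fin w) (Fin w) ℝ}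
variable {B : ℕ → ℕ → Matrix (Fin w) (Fin w) ℝ}

/-- exact partial products -/
def PP (A : ℕ → Matrix (Fin w) (Fin w) ℝ) (i j : ℕ) : Matrix (Fin w) (Fin w) ℝ :=
  ((List.range' i (j - i)).map A).prod

lemma PP_self (i : ℕ) : PP A i i = 1 := by simp [PP]

lemma PP_cons {i j : ℕ} (h : i < j) : PP A i j = A i * PP A (i+1) j := by
  unfold PP
  have h1 : j - i = (j - (i+1)) + 1 := by omega
  rw [h1, List.range'_succ]
  simp

lemma PP_concat {i j : ℕ} (h : i ≤ j) : PP A i (j+1) = PP A i j * A j := by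
  unfold PP
  have h1 : j + 1 - i = (j - i) + 1 := by omega
  rw [h1, List.range'_concat]
  simp only [List.map_append, List.prod_append, List.map_cons, List.map_nil,
    List.prod_cons, List.prod_nil, mul_one]
  rw [show i + 1 * (j - i) = j by omega]

lemma nrm_zero (h_def : ∀ M, nrm M = 0 ↔ M = 0) : nrm 0 = 0 := (h_def 0).mpr rfl

lemma nrm_neg (h_smul : ∀ (c : ℝ) M, nrm (c • M) = |c| * nrm M)
    (M : Matrix (Fin w) (Fin w) ℝ) : nrm (-M) = nrm M := by
  rw [← neg_one_smul ℝ M, h_smul]; simp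

lemma nrm_sub_comm (h_smul : ∀ (c : ℝ) M, nrm (c • M) = |c| * nrm M)
    (M N : Matrix (Fin w) (Fin w) ℝ) : nrm (M - N) = nrm (N - M) := by
  rw [← nrm_neg h_smul (M - N)]; congr 1; abel

lemma nrmsum_le (h_def : ∀ M, nrm M = 0 ↔ M = 0)
    (h_tri : ∀ M N, nrm (M + N) ≤ nrm M + nrm N)
    {α : Type*} (l : List α) (f : α → Matrix (Fin w) (Fin w) ℝ) (c : ℝ)
    (hb : ∀ x ∈ l, nrm (f x) ≤ c) :
    nrm ((l.map f).sum) ≤ l.length * c := by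
  induction l with
  | nil => simp [nrm_zero h_def]
  | cons a t ih =>
      simp only [List.map_cons, List.sum_cons, List.length_cons]
      have h1 := h_tri (f a) ((t.map f).sum)
      have h2 := ih (fun x hx => hb x (List.mem_cons_of_mem a hx))
      have h3 := hb a List.mem_cons_self
      push_cast
      nlinarith

lemma prodA_le (h_nonneg : ∀ M, 0 ≤ nrm M)
    (h_mul : ∀ M N, nrm (M * N) ≤ nrm M * nrm N)
    (l : List ℕ) (hl : ∀ i ∈ l, nrm (A i) ≤ 1) (hne : l ≠ []) :
    nrm ((l.map A).prod) ≤ 1 := by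
  induction l with
  | nil => exact absurd rfl hne
  | cons a t ih =>
      cases t with
      | nil => simpa using hl a (by simp)
      | cons b t' =>
          have h1 := h_mul (A a) (((b :: t').map A).prod)
          have h2 := ih (fun i hi => hl i (List.mem_cons_of_mem a hi)) (by simp)
          have h3 := hl a (by simp)
          have h4 := h_nonneg (((b :: t').map A).prod)
          simp only [List.map_cons, List.prod_cons] at *
          nlinarith

lemma PP_le (h_nonneg : ∀ M, 0 ≤ nrm M)
    (h_mul : ∀ M N, nrm (M * N) ≤ nrm M * nrm N)
    (hA : ∀ i < n, nrm (A i) ≤ 1) {i j : ℕ} (hij : i < j) (hj : j ≤ n) :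
    nrm (PP A i j) ≤ 1 := by
  apply prodA_le h_nonneg h_mul
  · intro x hx
    rw [List.mem_range'_1] at hx
    exact hA x (by omega)
  · have : (List.range' i (j-i)).length = j - i := List.length_range' ..
    intro hc; rw [hc] at this; simp at this; omega

lemma hE (h_def : ∀ M, nrm M = 0 ↔ M = 0)
    (hεpos : 0 ≤ ε / (2 * ((n:ℝ)+1)))
    (hBii : ∀ i ≤ n, B i i = 1)
    (hBstep : ∀ i < n, B i (i + 1) = A i)
    (hBapprox : ∀ i j : ℕ, i + 1 < j → j ≤ n →
      nrm (B i j - ((List.range' i (j - i)).map A).prod) ≤ ε / (2 * ((n : ℝ) + 1)))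
    {i j : ℕ} (hij : i ≤ j) (hj : j ≤ n) :
    nrm (B i j - PP A i j) ≤ ε / (2 * ((n:ℝ)+1)) := by
  rcases Nat.lt_or_ge (i+1) j with h | h
  · exact hBapprox i j h hj
  · rcases Nat.eq_or_lt_of_le hij with h2 | h2
    · subst h2
      rw [hBii i hj, PP_self, sub_self, nrm_zero h_def]
      exact hεpos
    · have : j = i + 1 := by omega
      subst this
      rw [hBstep i (by omega), PP_cons (by omega), PP_self, mul_one, sub_self,
        nrm_zero h_def]
      exact hεpos

lemma claimA (hBii : ∀ i ≤ n, B i i = 1) (hBstep : ∀ i < n, B i (i + 1) = A i)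
    {j : ℕ} (hj : j ≤ n) :
    ((List.range' j (n-j)).map
      (fun l => (B j (l+1) - B j l * B l (l+1)) * PP A (l+1) n)).sum
      = B j n - PP A j n := by
  have key : ((List.range' j (n-j)).map
      (fun l => (B j (l+1) - B j l * B l (l+1)) * PP A (l+1) n)).sum
      = ((List.range' j (n-j)).map
      (fun l => (fun t => B j t * PP A t n) (l+1) - (fun t => B j t * PP A t n) l)).sum := by
    apply congrArg
    apply List.map_congr_left
    intro l hl
    rw [List.mem_range'_1] at hl
    have hln : l < n := by omega
    rw [hBstep l hln, sub_mul, mul_assoc]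
    rw [show A l * PP A (l+1) n = PP A l n from (PP_cons hln).symm]
  rw [key, teleaux (fun t => B j t * PP A t n) j (n-j)]
  simp only [show j + (n - j) = n by omega, PP_self, mul_one, hBii j hj, one_mul]

lemma lemY (h_nonneg : ∀ M, 0 ≤ nrm M)
    (h_def : ∀ M, nrm M = 0 ↔ M = 0)
    (h_smul : ∀ (c : ℝ) M, nrm (c • M) = |c| * nrm M)
    (h_tri : ∀ M N, nrm (M + N) ≤ nrm M + nrm N)
    (h_mul : ∀ M N, nrm (M * N) ≤ nrm M * nrm N)
    (hεpos : 0 ≤ ε / (2 * ((n:ℝ)+1)))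
    (hA : ∀ i < n, nrm (A i) ≤ 1)
    (hBii : ∀ i ≤ n, B i i = 1)
    (hBstep : ∀ i < n, B i (i + 1) = A i)
    (hBapprox : ∀ i j : ℕ, i + 1 < j → j ≤ n →
      nrm (B i j - ((List.range' i (j - i)).map A).prod) ≤ ε / (2 * ((n : ℝ) + 1)))
    (m : ℕ) : ∀ j ≤ n,
    nrm (yy n B m j - PP A j n)
      ≤ (ε / (2 * ((n:ℝ)+1))) * (2 * n * (ε / (2 * ((n:ℝ)+1))))^m := by
  set δ := ε / (2 * ((n:ℝ)+1)) with hδ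
  induction m with
  | zero =>
      intro j hj
      simpa [yy] using hE h_def hεpos hBii hBstep hBapprox hj le_rfl
  | succ m ih =>
      intro j hj
      have hrw : yy n B (m+1) j - PP A j n =
          ((List.range' j (n-j)).map
            (fun l => (B j (l+1) - B j l * B l (l+1)) *
              (PP A (l+1) n - yy n B m (l+1)))).sum := by
        have h1 : ((List.range' j (n-j)).map
            (fun l => (B j (l+1) - B j l * B l (l+1)) *
              (PP A (l+1) n - yy n B m (l+1)))).sum
            = ((List.range' j (n-j)).map
                (fun l => (B j (l+1) - B j l * B l (l+1)) * PP A (l+1) n)).sum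
              - ((List.range' j (n-j)).map
                (fun l => (B j (l+1) - B j l * B l (l+1)) * yy n B m (l+1))).sum := by
          rw [listsum_sub]
          apply congrArg
          apply List.map_congr_left
          intro l _
          exact mul_sub (B j (l+1) - B j l * B l (l+1)) (PP A (l+1) n) (yy n B m (l+1))
        rw [show yy n B (m+1) j = B j n - ((List.range' j (n-j)).map
          (fun l => (B j (l+1) - B j l * B l (l+1)) * yy n B m (l+1))).sum from rfl]
        rw [h1, claimA hBii hBstep hj]
        abel
      rw [hrw]
      have hbound : ∀ l ∈ List.range' j (n-j),
          nrm ((B j (l+1) - B j l * B l (l+1)) * (PP A (l+1) n - yy n B m (l+1)))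
            ≤ (2*δ) * (δ * (2 * n * δ)^m) := by
        intro l hl
        rw [List.mem_range'_1] at hl
        have hln : l < n := by omega
        have hjl : j ≤ l := hl.1
        -- bound on D
        have hD : nrm (B j (l+1) - B j l * B l (l+1)) ≤ 2*δ := by
          have hsplit : B j (l+1) - B j l * B l (l+1)
              = (B j (l+1) - PP A j (l+1)) + ((PP A j l - B j l) * A l) := by
            rw [hBstep l hln, sub_mul, PP_concat hjl]
            abel
          rw [hsplit]
          have t1 := hE (A := A) h_def hεpos hBii hBstep hBapprox (show j ≤ l+1 by omega)
            (show l+1 ≤ n by omega)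
          have t2 : nrm ((PP A j l - B j l) * A l) ≤ δ := by
            have := h_mul (PP A j l - B j l) (A l)
            have t3 : nrm (PP A j l - B j l) ≤ δ := by
              rw [nrm_sub_comm h_smul]
              exact hE (A := A) h_def hεpos hBii hBstep hBapprox hjl (by omega)
            have t4 := hA l hln
            have t5 := h_nonneg (PP A j l - B j l)
            have t6 := h_nonneg (A l)
            nlinarith
          have t7 := h_tri (B j (l+1) - PP A j (l+1)) ((PP A j l - B j l) * A l)
          rw [← hδ] at t1
          linarith
        have hy := ih (l+1) (by omega)
        rw [nrm_sub_comm h_smul] at hy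
        have := h_mul (B j (l+1) - B j l * B l (l+1)) (PP A (l+1) n - yy n B m (l+1))
        have n1 := h_nonneg (B j (l+1) - B j l * B l (l+1))
        have n2 := h_nonneg (PP A (l+1) n - yy n B m (l+1))
        nlinarith
      have := nrmsum_le h_def h_tri _ _ _ hbound
      have hlen : ((List.range' j (n-j)).length : ℝ) ≤ n := by
        rw [List.length_range']
        exact_mod_cast Nat.sub_le n j
      have hnn : (0:ℝ) ≤ (2*δ) * (δ * (2 * n * δ)^m) := by positivity
      have hfin : ((List.range' j (n-j)).length : ℝ) * ((2*δ) * (δ * (2 * n * δ)^m))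
          ≤ δ * (2 * n * δ)^(m+1) := by
        have : ((List.range' j (n-j)).length : ℝ) * ((2*δ) * (δ * (2 * n * δ)^m))
            ≤ (n:ℝ) * ((2*δ) * (δ * (2 * n * δ)^m)) := by nlinarith
        calc _ ≤ (n:ℝ) * ((2*δ) * (δ * (2 * n * δ)^m)) := this
          _ = δ * (2 * n * δ)^(m+1) := by ring
      linarith

lemma terms_inv : ∀ m j, j ≤ n → ∀ p ∈ tms n m j,
    (p.1 = 1 ∨ p.1 = -1) ∧ (∃ t, p.2 = j :: t) ∧ p.2.Chain' (· ≤ ·) ∧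
    p.2.getLast? = some n ∧ (∀ x ∈ p.2, x ≤ n) ∧ p.2.length ≤ 2*m+2 := by
  intro m
  induction m with
  | zero =>
      intro j hj p hp
      simp only [tms, List.mem_singleton] at hp
      subst hp
      refine ⟨Or.inl rfl, ⟨[n], rfl⟩, ?_, rfl, ?_, by simp⟩
      · exact List.isChain_cons_cons.mpr ⟨hj, List.isChain_singleton n⟩
      · intro x hx; simp at hx; omega
  | succ m ih =>
      intro j hj p hp
      simp only [tms, List.mem_cons] at hp
      rcases hp with hp | hp
      · subst hp
        refine ⟨Or.inl rfl, ⟨[n], rfl⟩, ?_, rfl, ?_, by simp⟩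
        · exact List.isChain_cons_cons.mpr ⟨hj, List.isChain_singleton n⟩
        · intro x hx; simp at hx; omega
      · rw [List.mem_flatMap] at hp
        obtain ⟨l, hl, hpl⟩ := hp
        rw [List.mem_range'_1] at hl
        have hln : l < n := by omega
        have hjl : j ≤ l := hl.1
        have hl1 : l + 1 ≤ n := by omega
        rw [List.mem_append] at hpl
        rcases hpl with hpl | hpl <;> rw [List.mem_map] at hpl <;>
          obtain ⟨q, hq, hqe⟩ := hpl <;>
          obtain ⟨hsgn, ⟨t, ht⟩, hch, hlast, hle, hlen⟩ := ih (l+1) hl1 q hq <;>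
          subst hqe <;> simp only []
        · refine ⟨?_, ⟨q.2, rfl⟩, ?_, ?_, ?_, ?_⟩
          · rcases hsgn with h | h <;> simp [h]
          · rw [ht]
            exact List.isChain_cons_cons.mpr ⟨by omega, ht ▸ hch⟩
          · rw [ht, List.getLast?_cons_cons, ← ht]; exact hlast
          · intro x hx
            rcases List.mem_cons.mp hx with h | h
            · omega
            · exact hle x h
          · simp only [List.length_cons]; omega
        · refine ⟨hsgn, ⟨l :: q.2, rfl⟩, ?_, ?_, ?_, ?_⟩
          · rw [ht]
            exact List.isChain_cons_cons.mpr ⟨hjl, List.isChain_cons_cons.mpr ⟨by omega, ht ▸ hch⟩⟩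
          · rw [ht, List.getLast?_cons_cons, List.getLast?_cons_cons, ← ht]; exact hlast
          · intro x hx
            rcases List.mem_cons.mp hx with h | h
            · omega
            · rcases List.mem_cons.mp h with h | h
              · omega
              · exact hle x h
          · simp only [List.length_cons]; omega

lemma terms_sum : ∀ m j, j ≤ n →
    ((tms n m j).map (fun p => p.1 • prodB B p.2)).sum = yy n B m j := by
  intro m
  induction m with
  | zero =>
      intro j hj
      simp [tms, yy, prodB]
  | succ m ih =>
      intro j hj
      rw [show tms n (m+1) j = ((1:ℝ), [j, n]) :: ((List.range' j (n-j)).flatMap (fun l =>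
        ((tms n m (l+1)).map (fun p => (-p.1, j :: p.2))) ++
        ((tms n m (l+1)).map (fun p => (p.1, j :: l :: p.2))))) from rfl]
      rw [List.map_cons, List.sum_cons, List.map_flatMap]
      have hinner : ∀ l ∈ List.range' j (n-j),
          ((((tms n m (l+1)).map (fun p => (-p.1, j :: p.2))) ++
            ((tms n m (l+1)).map (fun p => (p.1, j :: l :: p.2)))).map
              (fun p => p.1 • prodB B p.2)).sum
          = -((B j (l+1) - B j l * B l (l+1)) * yy n B m (l+1)) := by
        intro l hl
        rw [List.mem_range'_1] at hl
        have hl1 : l + 1 ≤ n := by omega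
        have hhead : ∀ q ∈ tms n m (l+1), ∃ t, q.2 = (l+1) :: t :=
          fun q hq => (terms_inv m (l+1) hl1 q hq).2.1
        rw [List.map_append, List.sum_append, List.map_map, List.map_map]
        have e1 : ((tms n m (l+1)).map
            ((fun p => p.1 • prodB B p.2) ∘ (fun p => (-p.1, j :: p.2)))).sum
            = -(B j (l+1) * yy n B m (l+1)) := by
          rw [← ih (l+1) hl1, ← listsum_mul_left, ← listsum_neg]
          apply congrArg
          apply List.map_congr_left
          intro q hq
          obtain ⟨t, ht⟩ := hhead q hq
          simp only [Function.comp_apply, ht]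
          rw [show prodB B (j :: (l+1) :: t) = B j (l+1) * prodB B ((l+1) :: t) from rfl]
          rw [neg_smul, mul_smul_comm]
        have e2 : ((tms n m (l+1)).map
            ((fun p => p.1 • prodB B p.2) ∘ (fun p => (p.1, j :: l :: p.2)))).sum
            = B j l * (B l (l+1) * yy n B m (l+1)) := by
          rw [← ih (l+1) hl1, ← listsum_mul_left, ← listsum_mul_left]
          apply congrArg
          apply List.map_congr_left
          intro q hq
          obtain ⟨t, ht⟩ := hhead q hq
          simp only [Function.comp_apply, ht]
          rw [show prodB B (j :: l :: (l+1) :: t)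
            = B j l * (B l (l+1) * prodB B ((l+1) :: t)) from rfl]
          rw [mul_smul_comm, mul_smul_comm]
        rw [e1, e2, sub_mul, mul_assoc]
        abel
      rw [listsum_flatMap, List.map_congr_left hinner]
      rw [show yy n B (m+1) j = B j n - ((List.range' j (n-j)).map
        (fun l => (B j (l+1) - B j l * B l (l+1)) * yy n B m (l+1))).sum from rfl]
      rw [listsum_neg]
      rw [show ((1:ℝ), [j, n]).1 • prodB B ((1:ℝ), [j, n]).2 = B j n by
        simp [prodB]]
      abel

lemma terms_len : ∀ m j, (tms n m j).length ≤ (2*n+1)^(m+1) := by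
  intro m
  induction m with
  | zero =>
      intro j
      have h := Nat.one_le_pow (0+1) (2*n+1) (by omega)
      simpa [tms] using h
  | succ m ih =>
      intro j
      have hX : 1 ≤ (2*n+1)^(m+1) := Nat.one_le_pow _ _ (by omega)
      rw [show tms n (m+1) j = ((1:ℝ), [j, n]) :: ((List.range' j (n-j)).flatMap (fun l =>
        ((tms n m (l+1)).map (fun p => (-p.1, j :: p.2))) ++
        ((tms n m (l+1)).map (fun p => (p.1, j :: l :: p.2))))) from rfl]
      rw [List.length_cons, List.length_flatMap]
      have hb : ∀ x ∈ (List.range' j (n-j)).map (List.length ∘ (fun l =>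
          ((tms n m (l+1)).map (fun p => (-p.1, j :: p.2))) ++
          ((tms n m (l+1)).map (fun p => (p.1, j :: l :: p.2))))),
          x ≤ 2 * (2*n+1)^(m+1) := by
        intro x hx
        rw [List.mem_map] at hx
        obtain ⟨l, _, hxe⟩ := hx
        subst hxe
        simp only [Function.comp_apply, List.length_append, List.length_map]
        have := ih (l+1)
        omega
      have := List.sum_le_card_nsmul _ _ hb
      rw [List.length_map, List.length_range'] at this
      have h2 : (n - j) * (2 * (2*n+1)^(m+1)) ≤ n * (2 * (2*n+1)^(m+1)) :=
        Nat.mul_le_mul_right _ (Nat.sub_le n j)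
      have h3 : (2*n+1)^(m+1+1) = (2*n+1) * (2*n+1)^(m+1) := by ring
      simp only [smul_eq_mul] at this
      calc (List.map _ _).sum + 1 ≤ (n - j) * (2 * (2*n+1)^(m+1)) + 1 := by (simp only [Function.comp_def] at this; omega)
        _ ≤ n * (2 * (2*n+1)^(m+1)) + 1 := by omega
        _ ≤ (2*n+1)^(m+1+1) := by rw [h3]; nlinarith

lemma getD_past (v : List ℕ) (hv : v.getLast? = some n) :
    ∀ t, v.length ≤ t + 1 → v.getD t n = n := by
  induction v with
  | nil => intro t _; simp
  | cons a tl ih =>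
      intro t ht
      cases tl with
      | nil =>
          simp at hv
          cases t with
          | zero => simpa using hv
          | succ t' => simp [List.getD]
      | cons b tl' =>
          rw [List.getLast?_cons_cons] at hv
          simp only [List.length_cons] at ht ⊢
          cases t with
          | zero => omega
          | succ t' =>
              rw [List.getD_cons_succ]
              exact ih hv t' (by simpa using ht)

lemma getD_mono (v : List ℕ) (hch : v.Chain' (· ≤ ·)) (hle : ∀ x ∈ v, x ≤ n)
    (hv : v.getLast? = some n) :
    ∀ a b : ℕ, a ≤ b → v.getD a n ≤ v.getD b n := by
  intro a b hab
  have hpw := List.isChain_iff_pairwise.mp hch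
  rcases Nat.lt_or_ge b v.length with hb | hb
  · have ha : a < v.length := lt_of_le_of_lt (by omega) hb
    rw [List.getD_eq_getElem _ _ ha, List.getD_eq_getElem _ _ hb]
    rcases Nat.eq_or_lt_of_le hab with h | h
    · subst h; rfl
    · exact List.pairwise_iff_get.mp hpw ⟨a, ha⟩ ⟨b, hb⟩ h
  · rw [List.getD_eq_default _ _ hb]
    rcases Nat.lt_or_ge a v.length with ha | ha
    · rw [List.getD_eq_getElem _ _ ha]
      exact hle _ (v.getElem_mem ha)
    · rw [List.getD_eq_default _ _ ha]

lemma padprod (hBnn : B n n = 1) :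
    ∀ (v : List ℕ) (k : ℕ), v ≠ [] → v.getLast? = some n → v.length ≤ k + 1 →
    (List.ofFn (fun t : Fin k => B (v.getD t n) (v.getD (t+1) n))).prod = prodB B v := by
  intro v
  induction v with
  | nil => intro k h; exact absurd rfl h
  | cons a tl ih =>
      intro k _ hlast hlen
      cases tl with
      | nil =>
          simp only [List.getLast?_singleton, Option.some_inj] at hlast
          subst hlast
          have hfun : ∀ t : Fin k, B ([a].getD (t:ℕ) a) ([a].getD ((t:ℕ)+1) a) = 1 := by
            intro t
            have h1 : [a].getD ((t:ℕ)+1) a = a := by simp [List.getD]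
            have h2 : [a].getD (t:ℕ) a = a := by
              cases h : (t:ℕ) with
              | zero => simp
              | succ t' => simp [List.getD]
            rw [h1, h2, hBnn]
          rw [show prodB B [a] = 1 from rfl]
          rw [show (fun t : Fin k => B ([a].getD (t:ℕ) a) ([a].getD ((t:ℕ)+1) a))
            = fun _ : Fin k => (1 : Matrix (Fin w) (Fin w) ℝ) from funext hfun]
          simp
      | cons b tl' =>
          have hk : ∃ k', k = k' + 1 := by
            simp only [List.length_cons] at hlen
            exact ⟨k - 1, by omega⟩
          obtain ⟨k', rfl⟩ := hk
          rw [List.ofFn_succ, List.prod_cons]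
          show B a b * (List.ofFn fun i : Fin k' =>
              B ((b::tl').getD (i:ℕ) n) ((b::tl').getD ((i:ℕ)+1) n)).prod
            = prodB B (a :: b :: tl')
          rw [show prodB B (a :: b :: tl') = B a b * prodB B (b :: tl') from rfl]
          rw [List.getLast?_cons_cons] at hlast
          rw [ih k' (by simp) hlast (by simp only [List.length_cons] at hlen ⊢; omega)]

end core

/-- index paths -/
def idxF (n a K k1 : ℕ) : Fin K → Fin k1 → ℕ := fun i t =>
  if h : (i:ℕ) < (tms n a 0).length then ((tms n a 0).get ⟨i,h⟩).2.getD (t:ℕ) n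
  else if (t:ℕ) = 0 then 0 else n

/-- signs -/
def sgF (n a K : ℕ) : Fin K → ℝ := fun i =>
  if h : (i:ℕ) < (tms n a 0).length then ((tms n a 0).get ⟨i,h⟩).1 else 0


end StmtSix

-- STATEMENT 6
theorem stmt6 (w n : ℕ) (hn : 0 < n) (ε : ℝ) (hε : 0 < ε) (hε1 : ε < 1)
    (nrm : Matrix (Fin w) (Fin w) ℝ → ℝ)
    (h_nonneg : ∀ M, 0 ≤ nrm M)
    (h_def : ∀ M, nrm M = 0 ↔ M = 0)
    (h_smul : ∀ (c : ℝ) M, nrm (c • M) = |c| * nrm M)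
    (h_tri : ∀ M N, nrm (M + N) ≤ nrm M + nrm N)
    (h_mul : ∀ M N, nrm (M * N) ≤ nrm M * nrm N)
    (A : ℕ → Matrix (Fin w) (Fin w) ℝ)
    (B : ℕ → ℕ → Matrix (Fin w) (Fin w) ℝ)
    (hA : ∀ i < n, nrm (A i) ≤ 1)
    (hBii : ∀ i ≤ n, B i i = 1)
    (hBstep : ∀ i < n, B i (i + 1) = A i)
    (hBapprox : ∀ i j : ℕ, i + 1 < j → j ≤ n →
      nrm (B i j - ((List.range' i (j - i)).map A).prod) ≤ ε / (2 * ((n : ℝ) + 1)))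
    (k : ℕ) (hk : Odd k) :
    ∃ (idx : Fin ((8 * n) ^ (k + 1)) → Fin (k + 1) → ℕ)
      (σ : Fin ((8 * n) ^ (k + 1)) → ℝ),
      (∀ i, idx i 0 = 0 ∧ idx i (Fin.last k) = n ∧ Monotone (idx i)) ∧
      (∀ i, σ i = -1 ∨ σ i = 0 ∨ σ i = 1) ∧
      nrm (((List.range' 0 n).map A).prod -
          ∑ i : Fin ((8 * n) ^ (k + 1)), σ i •
            (List.ofFn (fun j : Fin k => B (idx i j.castSucc) (idx i j.succ))).prod)
        ≤ ε ^ ((k + 1) / 2) * ((n : ℝ) + 1) := by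
  obtain ⟨a, hka⟩ := hk
  have hδpos : (0:ℝ) ≤ ε / (2 * ((n:ℝ)+1)) := by positivity
  set T := tms n a 0 with hT
  set K := (8 * n) ^ (k + 1) with hK
  have hTlen : T.length ≤ K := by
    calc T.length ≤ (2*n+1)^(a+1) := terms_len a 0
      _ ≤ (8*n)^(a+1) := Nat.pow_le_pow_left (by omega) _
      _ ≤ (8*n)^(k+1) := Nat.pow_le_pow_right (by omega) (by omega)
  have hinv := fun p hp => terms_inv (n := n) a 0 (Nat.zero_le n) p hp
  have hBnn : B n n = 1 := hBii n le_rfl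
  refine ⟨idxF n a K (k+1), sgF n a K, ?_, ?_, ?_⟩
  · intro i
    by_cases h : (i:ℕ) < T.length
    · obtain ⟨hsgn, ⟨t, ht⟩, hch, hlast, hle, hlen⟩ := hinv _ (T.get_mem ⟨i, h⟩)
      refine ⟨?_, ?_, ?_⟩
      · simp only [idxF, ← hT, dif_pos h]
        rw [ht]
        rfl
      · simp only [idxF, ← hT, dif_pos h, Fin.val_last]
        exact getD_past _ hlast k (by omega)
      · intro s t hst
        simp only [idxF, ← hT, dif_pos h]
        exact getD_mono _ hch hle hlast _ _ hst
    · refine ⟨by simp [idxF, ← hT, dif_neg h], ?_, ?_⟩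
      · simp only [idxF, ← hT, dif_neg h, Fin.val_last]
        rw [if_neg (by omega)]
      · intro s t hst
        simp only [idxF, ← hT, dif_neg h]
        have : (s:ℕ) ≤ (t:ℕ) := hst
        split_ifs <;> omega
  · intro i
    by_cases h : (i:ℕ) < T.length
    · obtain ⟨hsgn, _⟩ := hinv _ (T.get_mem ⟨i, h⟩)
      simp only [sgF, ← hT, dif_pos h]
      tauto
    · simp [sgF, ← hT, dif_neg h]
  · -- main bound
    have hsum : (∑ i : Fin K, sgF n a K i •
        (List.ofFn (fun t : Fin k =>
          B (idxF n a K (k+1) i t.castSucc) (idxF n a K (k+1) i t.succ))).prod)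
        = yy n B a 0 := by
      have hterm : ∀ i : Fin K, sgF n a K i •
          (List.ofFn (fun t : Fin k =>
            B (idxF n a K (k+1) i t.castSucc) (idxF n a K (k+1) i t.succ))).prod
          = (fun x : ℕ => if h : x < T.length
              then (T.get ⟨x,h⟩).1 • prodB B (T.get ⟨x,h⟩).2 else 0) (i:ℕ) := by
        intro i
        by_cases h : (i:ℕ) < T.length
        · obtain ⟨hsgn, ⟨t, ht⟩, hch, hlast, hle, hlen⟩ := hinv _ (T.get_mem ⟨i, h⟩)
          simp only [idxF, sgF, ← hT, dif_pos h, Fin.coe_castSucc, Fin.val_succ]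
          congr 1
          exact padprod hBnn _ k (by rw [ht]; simp) hlast (by exact hlen.trans (by omega))
        · simp only [idxF, sgF, ← hT, dif_neg h, zero_smul]
      rw [Finset.sum_congr rfl (fun i _ => hterm i)]
      rw [Fin.sum_univ_eq_sum_range (fun x : ℕ => if h : x < T.length
          then (T.get ⟨x,h⟩).1 • prodB B (T.get ⟨x,h⟩).2 else 0) K]
      rw [← Finset.sum_subset (Finset.range_subset_range.mpr hTlen)
        (fun x _ hx => dif_neg (by simpa using hx))]
      rw [← terms_sum (B := B) a 0 (Nat.zero_le n), ← hT]
      exact listsum_dite T (fun p => p.1 • prodB B p.2)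
    rw [hsum]
    have hyy := lemY h_nonneg h_def h_smul h_tri h_mul hδpos hA hBii hBstep hBapprox
      a 0 (Nat.zero_le n)
    rw [show ((List.range' 0 n).map A).prod = PP A 0 n from rfl]
    rw [nrm_sub_comm h_smul]
    set δ := ε / (2 * ((n:ℝ)+1)) with hδ
    have hδε : δ * (2*((n:ℝ)+1)) = ε := div_mul_cancel₀ ε (by positivity)
    have h2 : 2*(n:ℝ)*δ ≤ ε := by nlinarith
    have h3 : (0:ℝ) ≤ 2*(n:ℝ)*δ := by positivity
    have h4 : (2*(n:ℝ)*δ)^a ≤ ε^a := pow_le_pow_left₀ h3 h2 a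
    have h5 : δ ≤ ε := by nlinarith
    have h7 : δ * (2*(n:ℝ)*δ)^a ≤ ε * ε^a :=
      mul_le_mul h5 h4 (by positivity) (le_of_lt hε)
    have h9 : (k+1)/2 = a+1 := by omega
    rw [h9]
    have h10 : ε^(a+1) ≤ ε^(a+1) * ((n:ℝ)+1) := by
      nlinarith [pow_nonneg (le_of_lt hε) (a+1)]
    have h8 : ε * ε^a = ε^(a+1) := by ring
    linarith
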